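/- Let ω ∈ ℝ and let P : ℝ³ → ℝ be a nonzero Schwartz function satisfying −ΔP(x) + P(x)⁵ − P(x)³ + ω·P(x) = 0 for every x ∈ ℝ³. Set β := (∫|P|⁶ dx)/(∫|∇P|² dx) and define R : ℝ³ → ℝ by R(x) := √((1+β)/(4β)) · P( (3(1+β)/(4√(3β))) · x ). Then V(R) = 0. -/

import Mathlib

open MeasureTheory SchwartzMap Real FourierTransform

noncomputable section

abbrev E3 := EuclideanSpace ℝ (Fin 3)

/-- The Laplacian: sum of second partial derivatives. -/
def lap (P : SchwartzMap E3 ℝ) (x : E3) : ℝ :=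
  ∑ i : Fin 3,
    fderiv ℝ (fun y => fderiv ℝ P y (EuclideanSpace.single i 1)) x
      (EuclideanSpace.single i 1)

/-- The virial of a real-valued function on ℝ³. -/
def Vfun (f : E3 → ℝ) : ℝ :=
  ∫ x : E3, (‖fderiv ℝ f x‖ ^ 2 + ‖f x‖ ^ 6 - (3 / 4) * ‖f x‖ ^ 4)

namespace Virial

lemma htg (f : SchwartzMap E3 ℝ) : Function.HasTemperateGrowth (f : E3 → ℝ) := by
  refine ⟨f.smooth ⊤, fun n => ⟨0, SchwartzMap.seminorm ℝ 0 n f, fun x => ?_⟩⟩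
  simpa using f.norm_iteratedFDeriv_le_seminorm ℝ n x

def mulS (f g : SchwartzMap E3 ℝ) : SchwartzMap E3 ℝ :=
  bilinLeftCLM (ContinuousLinearMap.mul ℝ ℝ) (htg g) f

lemma mulS_apply (f g : SchwartzMap E3 ℝ) (x : E3) : mulS f g x = f x * g x := rfl

def xmul (i : Fin 3) (f : SchwartzMap E3 ℝ) : SchwartzMap E3 ℝ :=
  bilinLeftCLM (ContinuousLinearMap.mul ℝ ℝ)
    ((EuclideanSpace.proj i : E3 →L[ℝ] ℝ).hasTemperateGrowth) f

lemma xmul_apply (i : Fin 3) (f : SchwartzMap E3 ℝ) (x : E3) : xmul i f x = f x * x i := rfl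

def Di (i : Fin 3) : SchwartzMap E3 ℝ →L[ℝ] SchwartzMap E3 ℝ :=
  LineDeriv.lineDerivOpCLM ℝ (SchwartzMap E3 ℝ) (EuclideanSpace.single i (1 : ℝ) : E3)

lemma Di_apply (i : Fin 3) (f : SchwartzMap E3 ℝ) (x : E3) :
    Di i f x = fderiv ℝ (f : E3 → ℝ) x (EuclideanSpace.single i 1) := rfl

lemma sum_apply {n : ℕ} (f : Fin n → SchwartzMap E3 ℝ) (x : E3) :
    (∑ i : Fin n, f i) x = ∑ i : Fin n, f i x := by
  have h := map_sum (FunLike.coeAddMonoidHom (SchwartzMap E3 ℝ) E3 ℝ) f Finset.univ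
  calc (∑ i : Fin n, f i) x = ((FunLike.coeAddMonoidHom (SchwartzMap E3 ℝ) E3 ℝ) (∑ i : Fin n, f i)) x := rfl
    _ = (∑ i : Fin n, (FunLike.coeAddMonoidHom (SchwartzMap E3 ℝ) E3 ℝ) (f i)) x := by rw [h]
    _ = ∑ i : Fin n, f i x := Finset.sum_apply _ _ _

/-! ### The fundamental lemma : integral of a derivative of a Schwartz function vanishes -/

lemma key_integral_fderiv (f : SchwartzMap E3 ℝ) (v : E3) :
    ∫ x : E3, fderiv ℝ (f : E3 → ℝ) x v = 0 := by
  set g : E3 → ℂ := fun x => (f x : ℂ) with hg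
  have hgd : ∀ x, HasFDerivAt g (Complex.ofRealCLM.comp (fderiv ℝ (f : E3 → ℝ) x)) x :=
    fun x => (Complex.ofRealCLM.hasFDerivAt).comp x f.differentiableAt.hasFDerivAt
  have hgfd : fderiv ℝ g = fun x => Complex.ofRealCLM.comp (fderiv ℝ (f : E3 → ℝ) x) :=
    funext fun x => (hgd x).fderiv
  have hint : Integrable g := f.integrable.ofReal
  have hdiff : Differentiable ℝ g := fun x => (hgd x).differentiableAt
  have hfd_int : Integrable (fderiv ℝ g) := by
    rw [hgfd]
    refine ((fderivCLM ℝ E3 ℝ f).integrable (μ := volume)).norm.mono' ?_ ?_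
    · apply Continuous.aestronglyMeasurable
      exact (ContinuousLinearMap.compL ℝ E3 ℝ ℂ Complex.ofRealCLM).continuous.comp
        (SchwartzMap.continuous (fderivCLM ℝ E3 ℝ f))
    · refine Filter.Eventually.of_forall fun x => ?_
      simpa using (Complex.ofRealCLM.opNorm_comp_le (fderiv ℝ (f : E3 → ℝ) x))
  have h := Real.fourier_fderiv hint hdiff hfd_int
  have h0 : 𝓕 (fderiv ℝ g) 0 = ∫ x, fderiv ℝ g x := by
    rw [Real.fourier_eq]
    simp
  have h1 : VectorFourier.fourierSMulRight (-innerSL ℝ) (𝓕 g) 0 = 0 := by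
    simp only [VectorFourier.fourierSMulRight, ContinuousLinearMap.neg_apply, coe_innerSL_apply]
    ext y
    simp
  have h2 : (∫ x, fderiv ℝ g x) = 0 := by
    rw [← h0, h, h1]
  have h3 : (∫ x, fderiv ℝ g x v) = ((0 : E3 →L[ℝ] ℂ)) v := by
    rw [← h2, ContinuousLinearMap.integral_apply hfd_int]
  rw [hgfd] at h3
  simp only [ContinuousLinearMap.comp_apply, Complex.ofRealCLM_apply,
    ContinuousLinearMap.zero_apply] at h3
  have h4 : ∫ x : E3, (((fderiv ℝ (f : E3 → ℝ) x v : ℝ)) : ℂ)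
      = ((∫ x : E3, fderiv ℝ (f : E3 → ℝ) x v : ℝ) : ℂ) := integral_ofReal
  rw [h4] at h3
  exact_mod_cast h3

/-! ### Pointwise derivative rules -/

lemma fderiv_mulS (f g : SchwartzMap E3 ℝ) (x : E3) (v : E3) :
    fderiv ℝ (mulS f g : E3 → ℝ) x v
      = fderiv ℝ (f : E3 → ℝ) x v * g x + f x * fderiv ℝ (g : E3 → ℝ) x v := by
  have h : (mulS f g : E3 → ℝ) = fun y => f y * g y := rfl
  rw [h, fderiv_fun_mul f.differentiableAt g.differentiableAt]
  simp only [ContinuousLinearMap.add_apply, ContinuousLinearMap.coe_smul', Pi.smul_apply,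
    smul_eq_mul, PiLp.proj_apply]
  ring

lemma Di_mulS (f g : SchwartzMap E3 ℝ) (i : Fin 3) (x : E3) :
    Di i (mulS f g) x = Di i f x * g x + f x * Di i g x :=
  fderiv_mulS f g x _

lemma fderiv_xmul (i : Fin 3) (f : SchwartzMap E3 ℝ) (x : E3) (v : E3) :
    fderiv ℝ (xmul i f : E3 → ℝ) x v
      = fderiv ℝ (f : E3 → ℝ) x v * x i + f x * v i := by
  have h : (xmul i f : E3 → ℝ) = fun y => f y * (EuclideanSpace.proj (𝕜 := ℝ) i) y := rfl
  rw [h, fderiv_fun_mul f.differentiableAt (EuclideanSpace.proj i).differentiableAt]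
  simp only [ContinuousLinearMap.fderiv, ContinuousLinearMap.add_apply,
    ContinuousLinearMap.coe_smul', Pi.smul_apply, smul_eq_mul, PiLp.proj_apply]
  ring

/-! ### Integration by parts lemmas -/

lemma ibp (f g : SchwartzMap E3 ℝ) (i : Fin 3) :
    ∫ x : E3, Di i f x * g x = - ∫ x : E3, f x * Di i g x := by
  have h0 : ∫ x : E3, (mulS (Di i f) g x + mulS f (Di i g) x) = 0 := by
    rw [show (fun x : E3 => (mulS (Di i f) g x + mulS f (Di i g) x))
        = fun x => fderiv ℝ (mulS f g : E3 → ℝ) x (EuclideanSpace.single i 1) from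
      funext fun x => (fderiv_mulS f g x _).symm]
    exact key_integral_fderiv (mulS f g) _
  rw [integral_add (mulS (Di i f) g).integrable (mulS f (Di i g)).integrable] at h0
  simpa [mulS_apply] using eq_neg_of_add_eq_zero_left h0

lemma int_x_deriv (g : SchwartzMap E3 ℝ) (i : Fin 3) :
    ∫ x : E3, Di i g x * x i = - ∫ x : E3, g x := by
  have h0 : ∫ x : E3, (xmul i (Di i g) x + g x) = 0 := by
    rw [show (fun x : E3 => (xmul i (Di i g) x + g x))
        = fun x => fderiv ℝ (xmul i g : E3 → ℝ) x (EuclideanSpace.single i 1) from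
      funext fun x => by
        rw [fderiv_xmul]; simp [xmul_apply, Di_apply, EuclideanSpace.single_apply]]
    exact key_integral_fderiv (xmul i g) _
  rw [integral_add (xmul i (Di i g)).integrable g.integrable] at h0
  simpa [xmul_apply] using eq_neg_of_add_eq_zero_left h0

lemma half (g : SchwartzMap E3 ℝ) (i : Fin 3) :
    ∫ x : E3, Di i g x * g x * x i = -(1 / 2) * ∫ x : E3, g x * g x := by
  have h0 := int_x_deriv (mulS g g) i
  have h1 : (fun x : E3 => Di i (mulS g g) x * x i)
      = fun x => 2 * (Di i g x * g x * x i) := by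
    funext x; rw [Di_mulS]; simp [mulS_apply]; ring
  rw [h1] at h0
  rw [integral_const_mul] at h0
  have h2 : ∫ x : E3, mulS g g x = ∫ x : E3, g x * g x := by
    simp [mulS_apply]
  rw [h2] at h0
  linarith

lemma Di_comm (f : SchwartzMap E3 ℝ) (i j : Fin 3) (x : E3) :
    Di j (Di i f) x = Di i (Di j f) x := by
  have hd : ∀ y, HasFDerivAt (f : E3 → ℝ) (fderiv ℝ (f : E3 → ℝ) y) y := fun y =>
    f.differentiableAt.hasFDerivAt
  have hcd : ContDiff ℝ 1 (fderiv ℝ (f : E3 → ℝ)) :=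
    (f.smooth ⊤).fderiv_right (m := 1) (WithTop.coe_le_coe.2 le_top)
  have hx : HasFDerivAt (fderiv ℝ (f : E3 → ℝ)) (fderiv ℝ (fderiv ℝ (f : E3 → ℝ)) x) x :=
    ((hcd.differentiable one_ne_zero) x).hasFDerivAt
  have hdd : DifferentiableAt ℝ (fderiv ℝ (f : E3 → ℝ)) x := hx.differentiableAt
  have key : ∀ m n : E3, fderiv ℝ (fun y => fderiv ℝ (f : E3 → ℝ) y m) x n
      = fderiv ℝ (fderiv ℝ (f : E3 → ℝ)) x n m := by
    intro m n
    rw [fderiv_clm_apply hdd (differentiableAt_const m)]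
    simp
  have h1 : Di j (Di i f) x
      = fderiv ℝ (fun y => fderiv ℝ (f : E3 → ℝ) y (EuclideanSpace.single i 1)) x
          (EuclideanSpace.single j 1) := rfl
  have h2 : Di i (Di j f) x
      = fderiv ℝ (fun y => fderiv ℝ (f : E3 → ℝ) y (EuclideanSpace.single j 1)) x
          (EuclideanSpace.single i 1) := rfl
  rw [h1, h2, key, key]
  exact second_derivative_symmetric hd hx _ _

section Pfixed

variable (P : SchwartzMap E3 ℝ)

lemma cell (i j : Fin 3) :
    (∫ x : E3, Di j (Di i P) x * Di j P x * x i)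
      + (∫ x : E3, Di i P x * Di j (Di j P) x * x i)
      + ((EuclideanSpace.single j (1 : ℝ)) i) * (∫ x : E3, Di i P x * Di j P x) = 0 := by
  set c : ℝ := (EuclideanSpace.single j (1 : ℝ)) i with hc
  have hpt : (fun x : E3 => Di j (Di i P) x * Di j P x * x i
        + (Di i P x * Di j (Di j P) x * x i + c * (Di i P x * Di j P x)))
      = fun x => fderiv ℝ (xmul i (mulS (Di i P) (Di j P)) : E3 → ℝ) x
          (EuclideanSpace.single j 1) := by
    funext x
    rw [fderiv_xmul, fderiv_mulS]
    simp only [mulS_apply, Di_apply, hc]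
    ring
  have h0 : ∫ x : E3, (Di j (Di i P) x * Di j P x * x i
        + (Di i P x * Di j (Di j P) x * x i + c * (Di i P x * Di j P x))) = 0 := by
    rw [hpt]; exact key_integral_fderiv _ _
  have I1 : Integrable (fun x : E3 => Di j (Di i P) x * Di j P x * x i) :=
    (xmul i (mulS (Di j (Di i P)) (Di j P))).integrable
  have I2 : Integrable (fun x : E3 => Di i P x * Di j (Di j P) x * x i) :=
    (xmul i (mulS (Di i P) (Di j (Di j P)))).integrable
  have I3 : Integrable (fun x : E3 => c * (Di i P x * Di j P x)) :=
    ((mulS (Di i P) (Di j P)).integrable).const_mul c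
  have I23 : Integrable (fun x : E3 => Di i P x * Di j (Di j P) x * x i
      + c * (Di i P x * Di j P x)) := I2.add I3
  rw [integral_add I1 I23, integral_add I2 I3, integral_const_mul] at h0
  linarith

lemma row (i : Fin 3) :
    ∫ x : E3, Di i P x * lap P x * x i
      = (1 / 2) * (∑ j : Fin 3, ∫ x : E3, Di j P x * Di j P x)
        - ∫ x : E3, Di i P x * Di i P x := by
  have hsplit : ∫ x : E3, Di i P x * lap P x * x i
      = ∑ j : Fin 3, ∫ x : E3, Di i P x * Di j (Di j P) x * x i := by
    rw [show (fun x : E3 => Di i P x * lap P x * x i)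
        = fun x : E3 => ∑ j : Fin 3, Di i P x * Di j (Di j P) x * x i from
      funext fun x => by
        have : lap P x = ∑ j : Fin 3, Di j (Di j P) x := rfl
        rw [this, Finset.mul_sum, Finset.sum_mul]]
    exact integral_finset_sum _ fun j _ =>
      (xmul i (mulS (Di i P) (Di j (Di j P)))).integrable
  rw [hsplit]
  have hcell : ∀ j : Fin 3, ∫ x : E3, Di i P x * Di j (Di j P) x * x i
      = (1 / 2) * (∫ x : E3, Di j P x * Di j P x)
        - (EuclideanSpace.single j (1 : ℝ)) i * ∫ x : E3, Di i P x * Di j P x := by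
    intro j
    have hA : ∫ x : E3, Di j (Di i P) x * Di j P x * x i
        = -(1 / 2) * ∫ x : E3, Di j P x * Di j P x := by
      rw [show (fun x : E3 => Di j (Di i P) x * Di j P x * x i)
          = fun x => Di i (Di j P) x * Di j P x * x i from
        funext fun x => by rw [Di_comm]]
      exact half (Di j P) i
    have := cell P i j
    rw [hA] at this
    linarith
  rw [Finset.sum_congr rfl fun j _ => hcell j]
  rw [Finset.sum_sub_distrib, ← Finset.mul_sum]
  have hdelta : ∑ j : Fin 3, (EuclideanSpace.single j (1 : ℝ)) i
      * ∫ x : E3, Di i P x * Di j P x = ∫ x : E3, Di i P x * Di i P x := by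
    rw [Finset.sum_eq_single i]
    · simp [EuclideanSpace.single_apply]
    · intro j _ hji
      simp [EuclideanSpace.single_apply, Ne.symm hji]
    · simp
  rw [hdelta]

end Pfixed
lemma norm_sq_clm (L : E3 →L[ℝ] ℝ) :
    ‖L‖ ^ 2 = ∑ i : Fin 3, (L (EuclideanSpace.single i 1)) ^ 2 := by
  set v : E3 := (InnerProductSpace.toDual ℝ E3).symm L with hv
  have hnorm : ‖L‖ = ‖v‖ := ((InnerProductSpace.toDual ℝ E3).symm.norm_map L).symm
  have happ : ∀ w : E3, L w = inner ℝ v w := fun w =>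
    (InnerProductSpace.toDual_symm_apply (E := E3)).symm
  have h1 : ‖v‖ ^ 2 = ∑ i : Fin 3, (v i) ^ 2 := by
    rw [← real_inner_self_eq_norm_sq]
    rw [PiLp.inner_apply]
    simp [pow_two]
  have h2 : ∀ i, L (EuclideanSpace.single i 1) = v i := by
    intro i
    rw [happ, EuclideanSpace.inner_single_right]
    simp
  rw [hnorm, h1]
  exact Finset.sum_congr rfl fun i _ => by rw [h2]


section PDE

variable (P : SchwartzMap E3 ℝ)

def pw2 : SchwartzMap E3 ℝ := mulS P P
def pw3 : SchwartzMap E3 ℝ := mulS (pw2 P) P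
def pw4 : SchwartzMap E3 ℝ := mulS (pw3 P) P
def pw5 : SchwartzMap E3 ℝ := mulS (pw4 P) P
def pw6 : SchwartzMap E3 ℝ := mulS (pw5 P) P

lemma pw6_apply (x : E3) : pw6 P x = P x ^ 6 := by
  simp only [pw6, pw5, pw4, pw3, pw2, mulS_apply]; ring
lemma pw4_apply (x : E3) : pw4 P x = P x ^ 4 := by
  simp only [pw4, pw3, pw2, mulS_apply]; ring
lemma pw2_apply (x : E3) : pw2 P x = P x ^ 2 := by
  simp only [pw2, mulS_apply]; ring

lemma xint6 (i : Fin 3) :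
    ∫ x : E3, P x ^ 5 * Di i P x * x i = -(1 / 6) * ∫ x : E3, P x ^ 6 := by
  have h := int_x_deriv (pw6 P) i
  have hD : (fun x : E3 => Di i (pw6 P) x * x i)
      = fun x => 6 * (P x ^ 5 * Di i P x * x i) := by
    funext x
    simp only [pw6, pw5, pw4, pw3, pw2, Di_mulS, mulS_apply]
    ring
  rw [hD, integral_const_mul] at h
  simp only [pw6_apply P] at h
  linarith

lemma xint4 (i : Fin 3) :
    ∫ x : E3, P x ^ 3 * Di i P x * x i = -(1 / 4) * ∫ x : E3, P x ^ 4 := by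
  have h := int_x_deriv (pw4 P) i
  have hD : (fun x : E3 => Di i (pw4 P) x * x i)
      = fun x => 4 * (P x ^ 3 * Di i P x * x i) := by
    funext x
    simp only [pw4, pw3, pw2, Di_mulS, mulS_apply]
    ring
  rw [hD, integral_const_mul] at h
  simp only [pw4_apply P] at h
  linarith

lemma xint2 (i : Fin 3) :
    ∫ x : E3, P x * Di i P x * x i = -(1 / 2) * ∫ x : E3, P x ^ 2 := by
  have h := int_x_deriv (pw2 P) i
  have hD : (fun x : E3 => Di i (pw2 P) x * x i)
      = fun x => 2 * (P x * Di i P x * x i) := by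
    funext x
    simp only [pw2, Di_mulS, mulS_apply]
    ring
  rw [hD, integral_const_mul] at h
  simp only [pw2_apply P] at h
  linarith

variable {ω : ℝ} (hPDE : ∀ x : E3, -lap P x + P x ^ 5 - P x ^ 3 + ω * P x = 0)

include hPDE

lemma lap_eq (x : E3) : lap P x = P x ^ 5 - P x ^ 3 + ω * P x := by
  have := hPDE x; linarith

lemma rowB (i : Fin 3) :
    ∫ x : E3, Di i P x * lap P x * x i
      = -(1 / 6) * (∫ x : E3, P x ^ 6) + (1 / 4) * (∫ x : E3, P x ^ 4)
        - (1 / 2) * (ω * ∫ x : E3, P x ^ 2) := by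
  have hpt : (fun x : E3 => Di i P x * lap P x * x i)
      = fun x => P x ^ 5 * Di i P x * x i - P x ^ 3 * Di i P x * x i
          + ω * (P x * Di i P x * x i) := by
    funext x
    rw [lap_eq P hPDE]
    ring
  have I6 : Integrable (fun x : E3 => P x ^ 5 * Di i P x * x i) :=
    ((xmul i (mulS (pw5 P) (Di i P))).integrable).congr (Filter.Eventually.of_forall fun x => by
      simp only [xmul_apply, mulS_apply, pw5, pw4, pw3, pw2]; ring)
  have I4 : Integrable (fun x : E3 => P x ^ 3 * Di i P x * x i) :=
    ((xmul i (mulS (pw3 P) (Di i P))).integrable).congr (Filter.Eventually.of_forall fun x => by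
      simp only [xmul_apply, mulS_apply, pw3, pw2]; ring)
  have I2 : Integrable (fun x : E3 => ω * (P x * Di i P x * x i)) :=
    (((xmul i (mulS P (Di i P))).integrable).congr (Filter.Eventually.of_forall fun x => by
      simp only [xmul_apply, mulS_apply])).const_mul ω
  have I64 : Integrable (fun x : E3 => P x ^ 5 * Di i P x * x i
      - P x ^ 3 * Di i P x * x i) := I6.sub I4
  rw [hpt, integral_add I64 I2, integral_sub I6 I4, integral_const_mul,
    xint6, xint4, xint2]
  ring

lemma E2 : (1 / 2) * (∑ j : Fin 3, ∫ x : E3, Di j P x * Di j P x)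
    = -(1 / 2) * (∫ x : E3, P x ^ 6) + (3 / 4) * (∫ x : E3, P x ^ 4)
      - (3 / 2) * (ω * ∫ x : E3, P x ^ 2) := by
  have h : ∀ i : Fin 3,
      (1 / 2) * (∑ j : Fin 3, ∫ x : E3, Di j P x * Di j P x)
          - (∫ x : E3, Di i P x * Di i P x)
        = -(1 / 6) * (∫ x : E3, P x ^ 6) + (1 / 4) * (∫ x : E3, P x ^ 4)
          - (1 / 2) * (ω * ∫ x : E3, P x ^ 2) :=
    fun i => (row P i).symm.trans (rowB P hPDE i)
  have hsum : ∑ j : Fin 3, (∫ x : E3, Di j P x * Di j P x)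
      = (∫ x : E3, Di (0 : Fin 3) P x * Di (0 : Fin 3) P x)
        + (∫ x : E3, Di (1 : Fin 3) P x * Di (1 : Fin 3) P x)
        + (∫ x : E3, Di (2 : Fin 3) P x * Di (2 : Fin 3) P x) := by
    rw [Fin.sum_univ_three]
  have h0 := h 0
  have h1 := h 1
  have h2 := h 2
  rw [hsum] at h0 h1 h2 ⊢
  linarith

lemma E1 : ∑ j : Fin 3, (∫ x : E3, Di j P x * Di j P x)
    = -((∫ x : E3, P x ^ 6) - (∫ x : E3, P x ^ 4) + ω * ∫ x : E3, P x ^ 2) := by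
  have hper : ∀ i : Fin 3, ∫ x : E3, Di i P x * Di i P x
      = - ∫ x : E3, P x * Di i (Di i P) x := fun i => ibp P (Di i P) i
  have hsum : ∑ j : Fin 3, (∫ x : E3, Di j P x * Di j P x)
      = - ∑ j : Fin 3, ∫ x : E3, P x * Di j (Di j P) x := by
    rw [Finset.sum_congr rfl fun j _ => hper j, ← Finset.sum_neg_distrib]
  have hlap : ∑ j : Fin 3, (∫ x : E3, P x * Di j (Di j P) x)
      = ∫ x : E3, P x * lap P x := by
    rw [show (fun x : E3 => P x * lap P x)
        = fun x : E3 => ∑ j : Fin 3, P x * Di j (Di j P) x from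
      funext fun x => by
        have : lap P x = ∑ j : Fin 3, Di j (Di j P) x := rfl
        rw [this, Finset.mul_sum]]
    exact (integral_finset_sum _ fun j _ => (mulS P (Di j (Di j P))).integrable).symm
  have hPl : ∫ x : E3, P x * lap P x
      = (∫ x : E3, P x ^ 6) - (∫ x : E3, P x ^ 4) + ω * ∫ x : E3, P x ^ 2 := by
    have hpt : (fun x : E3 => P x * lap P x)
        = fun x => P x ^ 6 - P x ^ 4 + ω * P x ^ 2 := by
      funext x; rw [lap_eq P hPDE]; ring
    have I6 : Integrable (fun x : E3 => P x ^ 6) :=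
      ((pw6 P).integrable).congr (Filter.Eventually.of_forall fun x => pw6_apply P x)
    have I4 : Integrable (fun x : E3 => P x ^ 4) :=
      ((pw4 P).integrable).congr (Filter.Eventually.of_forall fun x => pw4_apply P x)
    have I2 : Integrable (fun x : E3 => ω * P x ^ 2) :=
      (((pw2 P).integrable).congr (Filter.Eventually.of_forall fun x => pw2_apply P x)).const_mul ω
    have I64 : Integrable (fun x : E3 => P x ^ 6 - P x ^ 4) := I6.sub I4
    rw [hpt, integral_add I64 I2, integral_sub I6 I4, integral_const_mul]
  rw [hsum, hlap, hPl]

end PDE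


/-! ### Norm of gradient, positivity, scaling -/

lemma Knorm (P : SchwartzMap E3 ℝ) :
    ∫ x : E3, ‖fderiv ℝ (P : E3 → ℝ) x‖ ^ 2
      = ∑ j : Fin 3, ∫ x : E3, Di j P x * Di j P x := by
  rw [show (fun x : E3 => ‖fderiv ℝ (P : E3 → ℝ) x‖ ^ 2)
      = fun x => ∑ j : Fin 3, Di j P x * Di j P x from funext fun x => by
    rw [norm_sq_clm (fderiv ℝ (P : E3 → ℝ) x)]
    exact Finset.sum_congr rfl fun j _ => by rw [Di_apply, pow_two]]
  exact integral_finset_sum _ fun j _ => (mulS (Di j P) (Di j P)).integrable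

lemma gradsq_eq (P : SchwartzMap E3 ℝ) (x : E3) :
    ‖fderiv ℝ (P : E3 → ℝ) x‖ ^ 2 = (∑ j : Fin 3, mulS (Di j P) (Di j P)) x := by
  rw [sum_apply, norm_sq_clm (fderiv ℝ (P : E3 → ℝ) x)]
  exact Finset.sum_congr rfl fun j _ => by rw [mulS_apply, Di_apply, pow_two]

lemma int_gradsq (P : SchwartzMap E3 ℝ) :
    Integrable (fun x : E3 => ‖fderiv ℝ (P : E3 → ℝ) x‖ ^ 2) :=
  ((∑ j : Fin 3, mulS (Di j P) (Di j P)).integrable).congr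
    (Filter.Eventually.of_forall fun x => (gradsq_eq P x).symm)

lemma nonzero_exists {P : SchwartzMap E3 ℝ} (hP : P ≠ 0) : ∃ x, P x ≠ 0 := by
  by_contra h
  push_neg at h
  exact hP (SchwartzMap.ext fun x => by simpa using h x)

lemma S_pos {P : SchwartzMap E3 ℝ} (hP : P ≠ 0) : 0 < ∫ y : E3, ‖P y‖ ^ 6 := by
  have hnn : 0 ≤ fun y : E3 => ‖P y‖ ^ 6 := fun y => by positivity
  have hint : Integrable (fun y : E3 => ‖P y‖ ^ 6) := by
    refine ((pw6 P).integrable).congr (Filter.Eventually.of_forall fun x => ?_)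
    show pw6 P x = ‖P x‖ ^ 6
    rw [pw6_apply, Real.norm_eq_abs, (Even.pow_abs (by decide) _ : |P x| ^ 6 = P x ^ 6)]
  rw [integral_pos_iff_support_of_nonneg hnn hint]
  have hsupp : Function.support (fun y : E3 => ‖P y‖ ^ 6) = Function.support (P : E3 → ℝ) := by
    ext x
    simp [Function.mem_support, pow_eq_zero_iff]
  rw [hsupp]
  obtain ⟨x₀, hx₀⟩ := nonzero_exists hP
  exact (P.continuous.isOpen_support).measure_pos volume ⟨x₀, hx₀⟩

lemma K_pos {P : SchwartzMap E3 ℝ} (hP : P ≠ 0) :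
    0 < ∫ y : E3, ‖fderiv ℝ (P : E3 → ℝ) y‖ ^ 2 := by
  have hnn : 0 ≤ fun y : E3 => ‖fderiv ℝ (P : E3 → ℝ) y‖ ^ 2 := fun y => by positivity
  rw [integral_pos_iff_support_of_nonneg hnn (int_gradsq P)]
  have hsupp : Function.support (fun y : E3 => ‖fderiv ℝ (P : E3 → ℝ) y‖ ^ 2)
      = Function.support (fderiv ℝ (P : E3 → ℝ)) := by
    ext x
    simp [Function.mem_support, pow_eq_zero_iff]
  rw [hsupp]
  have hopen : IsOpen (Function.support (fderiv ℝ (P : E3 → ℝ))) := by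
    have hcont : Continuous (fderiv ℝ (P : E3 → ℝ)) :=
      SchwartzMap.continuous (fderivCLM ℝ E3 ℝ P)
    exact hcont.isOpen_support
  have hne : ∃ x, fderiv ℝ (P : E3 → ℝ) x ≠ 0 := by
    by_contra h
    push_neg at h
    have hconst : ∀ x : E3, P x = P 0 := fun x =>
      is_const_of_fderiv_eq_zero P.differentiable h x 0
    obtain ⟨C, hCpos, hC⟩ := P.decay 1 0
    have hP0 : P 0 = 0 := by
      by_contra hne0
      have hnorm : 0 < ‖P 0‖ := norm_pos_iff.2 hne0
      set x : E3 := ((C + 1) / ‖P 0‖) • EuclideanSpace.single (0 : Fin 3) (1 : ℝ) with hx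
      have hxnorm : ‖x‖ = (C + 1) / ‖P 0‖ := by
        rw [hx, norm_smul, EuclideanSpace.norm_single]
        rw [Real.norm_eq_abs, abs_of_pos (by positivity)]
        simp
      have := hC x
      rw [norm_iteratedFDeriv_zero, hconst x, hxnorm, pow_one] at this
      rw [div_mul_cancel₀ _ (ne_of_gt hnorm)] at this
      linarith
    obtain ⟨x₀, hx₀⟩ := nonzero_exists hP
    exact hx₀ ((hconst x₀).trans hP0)
  obtain ⟨x₀, hx₀⟩ := hne
  exact hopen.measure_pos volume ⟨x₀, hx₀⟩

lemma scaling (P : SchwartzMap E3 ℝ) (a c : ℝ) (ha : 0 < a) (hc : 0 < c) :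
    Vfun (fun x : E3 => a * P (c • x))
      = |((c : ℝ) ^ 3)⁻¹| * (a ^ 2 * c ^ 2 * (∫ y : E3, ‖fderiv ℝ (P : E3 → ℝ) y‖ ^ 2)
          + a ^ 6 * (∫ y : E3, ‖P y‖ ^ 6) - 3 / 4 * (a ^ 4 * ∫ y : E3, ‖P y‖ ^ 4)) := by
  have hfd : ∀ x : E3, fderiv ℝ (fun x : E3 => a * P (c • x)) x
      = a • c • fderiv ℝ (P : E3 → ℝ) (c • x) := by
    intro x
    have h1 : HasFDerivAt (fun x : E3 => P (c • x))
        ((fderiv ℝ (P : E3 → ℝ) (c • x)).comp (c • ContinuousLinearMap.id ℝ E3)) x :=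
      (P.differentiableAt.hasFDerivAt).comp x ((c • ContinuousLinearMap.id ℝ E3).hasFDerivAt)
    have h2 : HasFDerivAt (fun x : E3 => a * P (c • x))
        (a • (fderiv ℝ (P : E3 → ℝ) (c • x)).comp (c • ContinuousLinearMap.id ℝ E3)) x :=
      h1.const_mul a
    rw [h2.fderiv]
    congr 1
    ext v
    simp
  have hpt : (fun x : E3 => ‖fderiv ℝ (fun x : E3 => a * P (c • x)) x‖ ^ 2
        + ‖a * P (c • x)‖ ^ 6 - 3 / 4 * ‖a * P (c • x)‖ ^ 4)
      = fun x : E3 => (a ^ 2 * c ^ 2 * ‖fderiv ℝ (P : E3 → ℝ) (c • x)‖ ^ 2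
        + a ^ 6 * ‖P (c • x)‖ ^ 6 - 3 / 4 * (a ^ 4 * ‖P (c • x)‖ ^ 4)) := by
    funext x
    rw [hfd x]
    rw [norm_smul, norm_smul, norm_mul]
    simp only [Real.norm_eq_abs, abs_of_pos ha, abs_of_pos hc]
    ring
  have hG : Vfun (fun x : E3 => a * P (c • x))
      = ∫ x : E3, (fun y : E3 => (a ^ 2 * c ^ 2 * ‖fderiv ℝ (P : E3 → ℝ) y‖ ^ 2
          + a ^ 6 * ‖P y‖ ^ 6 - 3 / 4 * (a ^ 4 * ‖P y‖ ^ 4))) (c • x) := by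
    rw [Vfun, hpt]
  have hcs := Measure.integral_comp_smul (volume : Measure E3)
    (fun y : E3 => (a ^ 2 * c ^ 2 * ‖fderiv ℝ (P : E3 → ℝ) y‖ ^ 2
      + a ^ 6 * ‖P y‖ ^ 6 - 3 / 4 * (a ^ 4 * ‖P y‖ ^ 4))) c
  rw [hG, hcs]
  have hrank : Module.finrank ℝ E3 = 3 := finrank_euclideanSpace_fin
  rw [hrank, smul_eq_mul]
  congr 1
  have IK : Integrable (fun y : E3 => a ^ 2 * c ^ 2 * ‖fderiv ℝ (P : E3 → ℝ) y‖ ^ 2) :=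
    (int_gradsq P).const_mul _
  have I6 : Integrable (fun y : E3 => ‖P y‖ ^ 6) := by
    refine ((pw6 P).integrable).congr (Filter.Eventually.of_forall fun x => ?_)
    show pw6 P x = ‖P x‖ ^ 6
    rw [pw6_apply, Real.norm_eq_abs, (Even.pow_abs (by decide) _ : |P x| ^ 6 = P x ^ 6)]
  have I4 : Integrable (fun y : E3 => ‖P y‖ ^ 4) := by
    refine ((pw4 P).integrable).congr (Filter.Eventually.of_forall fun x => ?_)
    show pw4 P x = ‖P x‖ ^ 4
    rw [pw4_apply, Real.norm_eq_abs, (Even.pow_abs (by decide) _ : |P x| ^ 4 = P x ^ 4)]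
  have hsum : Integrable (fun y : E3 => a ^ 2 * c ^ 2 * ‖fderiv ℝ (P : E3 → ℝ) y‖ ^ 2
      + a ^ 6 * ‖P y‖ ^ 6) := IK.add (I6.const_mul _)
  rw [integral_sub (hsum) ((I4.const_mul _).const_mul _),
    integral_add IK (I6.const_mul _), integral_const_mul, integral_const_mul,
    integral_const_mul, integral_const_mul]

end Virial


open Virial in
theorem rescaled_soliton_zero_virial (ω : ℝ) (P : SchwartzMap E3 ℝ) (hP : P ≠ 0)
    (hPDE : ∀ x : E3, -lap P x + P x ^ 5 - P x ^ 3 + ω * P x = 0) :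
    Vfun (fun x : E3 =>
      Real.sqrt
          ((1 + (∫ y : E3, ‖P y‖ ^ 6) / (∫ y : E3, ‖fderiv ℝ P y‖ ^ 2)) /
            (4 * ((∫ y : E3, ‖P y‖ ^ 6) / (∫ y : E3, ‖fderiv ℝ P y‖ ^ 2)))) *
        P ((3 * (1 + (∫ y : E3, ‖P y‖ ^ 6) / (∫ y : E3, ‖fderiv ℝ P y‖ ^ 2)) /
            (4 * Real.sqrt
              (3 * ((∫ y : E3, ‖P y‖ ^ 6) / (∫ y : E3, ‖fderiv ℝ P y‖ ^ 2))))) • x))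
      = 0 := by
  have hSpos : 0 < ∫ y : E3, ‖P y‖ ^ 6 := S_pos hP
  have hKpos : 0 < ∫ y : E3, ‖fderiv ℝ (P : E3 → ℝ) y‖ ^ 2 := K_pos hP
  set S := ∫ y : E3, ‖P y‖ ^ 6 with hSdef
  set K := ∫ y : E3, ‖fderiv ℝ (P : E3 → ℝ) y‖ ^ 2 with hKdef
  set Q := ∫ y : E3, ‖P y‖ ^ 4 with hQdef
  set β := S / K with hbdef
  have hβ : 0 < β := div_pos hSpos hKpos
  set s := Real.sqrt (3 * β) with hsdef
  have hs : 0 < s := Real.sqrt_pos.2 (by positivity)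
  set c := 3 * (1 + β) / (4 * s) with hcdef
  have hc : 0 < c := by positivity
  set a := Real.sqrt ((1 + β) / (4 * β)) with hadef
  have ha : 0 < a := Real.sqrt_pos.2 (by positivity)
  rw [scaling P a c ha hc]
  rw [← hSdef, ← hKdef, ← hQdef]
  -- statement-form integrals equal power-form integrals
  have hS6 : (∫ y : E3, P y ^ 6) = S := by
    rw [hSdef]
    rw [show (fun y : E3 => ‖P y‖ ^ 6) = fun y : E3 => P y ^ 6 from
      funext fun y => by rw [Real.norm_eq_abs, Even.pow_abs (by decide)]]
  have hQ4 : (∫ y : E3, P y ^ 4) = Q := by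
    rw [hQdef]
    rw [show (fun y : E3 => ‖P y‖ ^ 4) = fun y : E3 => P y ^ 4 from
      funext fun y => by rw [Real.norm_eq_abs, Even.pow_abs (by decide)]]
  have hKnorm : K = ∑ j : Fin 3, ∫ x : E3, Di j P x * Di j P x := by
    rw [hKdef]; exact Knorm P
  have hE1 := E1 P hPDE
  have hE2 := E2 P hPDE
  rw [hS6, hQ4, ← hKnorm] at hE1 hE2
  -- Pohozaev consequence : (3/4) Q = K + S
  have hQKS : 3 / 4 * Q = K + S := by linarith
  -- algebra
  have h1β : 0 < 1 + β := by positivity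
  have ha2 : a ^ 2 = (1 + β) / (4 * β) := Real.sq_sqrt (by positivity)
  have hs2 : s ^ 2 = 3 * β := Real.sq_sqrt (by positivity)
  have hSK : S = β * K := by
    rw [hbdef]; field_simp
  have hc2 : c ^ 2 = 9 * (1 + β) ^ 2 / (48 * β) := by
    rw [hcdef, div_pow, mul_pow, mul_pow, hs2]; ring
  have ha6 : a ^ 6 = ((1 + β) / (4 * β)) ^ 3 := by rw [← ha2]; ring
  have ha4 : a ^ 4 = ((1 + β) / (4 * β)) ^ 2 := by rw [← ha2]; ring
  have hmain : a ^ 2 * c ^ 2 * K + a ^ 6 * S - 3 / 4 * (a ^ 4 * Q) = 0 := by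
    have h34 : 3 / 4 * (a ^ 4 * Q) = a ^ 4 * (K + S) := by
      rw [← hQKS]; ring
    rw [h34, hSK, ha2, hc2, ha6, ha4]
    field_simp
    ring
  rw [hmain, mul_zero]
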